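/- The function kl₊ : [0,1] × [0,1] → [0,∞] defined by kl₊(p,q) := kl(p,q) if p > q and kl₊(p,q) := 0 if p ≤ q, is jointly convex. -/

import Mathlib

open Real

/-- The Bernoulli Kullback–Leibler divergence `kl : [0,1] × [0,1] → [0,∞]`, with the
conventions `kl(0,q) = −log(1−q)`, `kl(1,q) = −log q`, and the value `∞` when a
logarithm of zero would occur. -/
noncomputable def bernKL (p q : ℝ) : EReal :=
  if p = 0 then (if q = 1 then ⊤ else ((-Real.log (1 - q) : ℝ) : EReal))
  else if p = 1 then (if q = 0 then ⊤ else ((-Real.log q : ℝ) : EReal))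
  else if q = 0 ∨ q = 1 then ⊤
  else ((p * Real.log (p / q) + (1 - p) * Real.log ((1 - p) / (1 - q)) : ℝ) : EReal)


/-- `kl₊(p,q) := kl(p,q)` if `p > q`, and `0` otherwise. -/
noncomputable def bernKLplus (p q : ℝ) : EReal :=
  if q < p then bernKL p q else 0

namespace BernAux

noncomputable def phi (x y : ℝ) : ℝ := x * (Real.log x - Real.log y)

noncomputable def klR (p q : ℝ) : ℝ := phi p q + phi (1-p) (1-q)

lemma log_ge (x : ℝ) (hx : 0 < x) : 1 - x⁻¹ ≤ Real.log x := by
  have h := Real.log_le_sub_one_of_pos (inv_pos.mpr hx)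
  rw [Real.log_inv] at h; linarith

lemma logsum_term (a b T S : ℝ) (ha : 0 ≤ a) (hb : 0 < b) (hT : 0 < T) (hS : 0 < S) :
    a * (Real.log T - Real.log S) + a - b * T / S ≤ a * (Real.log a - Real.log b) := by
  rcases eq_or_lt_of_le ha with h | h
  · subst h
    simp only [zero_mul, zero_add, mul_zero]
    have : 0 ≤ b * T / S := by positivity
    linarith
  · have hx : 0 < a * S / (b * T) := by positivity
    have hlog := log_ge _ hx
    rw [Real.log_div (by positivity) (by positivity),
        Real.log_mul (ne_of_gt h) (ne_of_gt hS), Real.log_mul (ne_of_gt hb) (ne_of_gt hT)] at hlog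
    have hinv : (a * S / (b * T))⁻¹ = b * T / (a * S) := by
      rw [inv_div]
    rw [hinv] at hlog
    have h2 := mul_le_mul_of_nonneg_left hlog (le_of_lt h)
    have h3 : a * (b * T / (a * S)) = b * T / S := by
      field_simp
    nlinarith [h2, h3]

lemma logsum (a₁ a₂ b₁ b₂ : ℝ) (ha₁ : 0 ≤ a₁) (ha₂ : 0 ≤ a₂) (hb₁ : 0 < b₁) (hb₂ : 0 < b₂) :
    (a₁+a₂) * (Real.log (a₁+a₂) - Real.log (b₁+b₂)) ≤
      a₁*(Real.log a₁ - Real.log b₁) + a₂*(Real.log a₂ - Real.log b₂) := by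
  rcases eq_or_lt_of_le (add_nonneg ha₁ ha₂) with h | h
  · have e1 : a₁ = 0 := by linarith
    have e2 : a₂ = 0 := by linarith
    simp [e1, e2]
  · have hS : 0 < b₁ + b₂ := by linarith
    have h1 := logsum_term a₁ b₁ (a₁+a₂) (b₁+b₂) ha₁ hb₁ h hS
    have h2 := logsum_term a₂ b₂ (a₁+a₂) (b₁+b₂) ha₂ hb₂ h hS
    have e : b₁ * (a₁+a₂) / (b₁+b₂) + b₂ * (a₁+a₂) / (b₁+b₂) = a₁ + a₂ := by
      field_simp
    nlinarith [h1, h2]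

lemma phi_smul (c x y : ℝ) (hc : 0 < c) (hx : 0 ≤ x) (hy : 0 < y) :
    phi (c*x) (c*y) = c * phi x y := by
  rcases eq_or_lt_of_le hx with h | h
  · simp [phi, ← h]
  · unfold phi
    rw [Real.log_mul (ne_of_gt hc) (ne_of_gt h), Real.log_mul (ne_of_gt hc) (ne_of_gt hy)]
    ring

lemma phi_cvx (lam x₁ x₂ y₁ y₂ : ℝ) (hl : 0 < lam) (hl2 : lam < 1)
    (hx₁ : 0 ≤ x₁) (hx₂ : 0 ≤ x₂) (hy₁ : 0 ≤ y₁) (hy₂ : 0 ≤ y₂)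
    (h1 : y₁ = 0 → x₁ = 0) (h2 : y₂ = 0 → x₂ = 0) :
    phi (lam*x₁+(1-lam)*x₂) (lam*y₁+(1-lam)*y₂) ≤ lam * phi x₁ y₁ + (1-lam) * phi x₂ y₂ := by
  have hl' : 0 < 1 - lam := by linarith
  rcases eq_or_lt_of_le hy₁ with hy₁' | hy₁' <;> rcases eq_or_lt_of_le hy₂ with hy₂' | hy₂'
  · have e1 := h1 hy₁'.symm; have e2 := h2 hy₂'.symm
    simp [e1, e2, ← hy₁', ← hy₂', phi]
  · have e1 := h1 hy₁'.symm
    rw [e1, ← hy₁']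
    simp only [mul_zero, zero_add, phi_smul (1-lam) x₂ y₂ hl' hx₂ hy₂']
    simp [phi]
  · have e2 := h2 hy₂'.symm
    rw [e2, ← hy₂']
    simp only [mul_zero, add_zero, phi_smul lam x₁ y₁ hl hx₁ hy₁']
    simp [phi]
  · have key := logsum (lam*x₁) ((1-lam)*x₂) (lam*y₁) ((1-lam)*y₂)
      (by positivity) (by positivity) (by positivity) (by positivity)
    have e1 : (lam*x₁)*(Real.log (lam*x₁) - Real.log (lam*y₁)) = lam * phi x₁ y₁ := by
      have := phi_smul lam x₁ y₁ hl hx₁ hy₁'; unfold phi at this ⊢; linarith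
    have e2 : ((1-lam)*x₂)*(Real.log ((1-lam)*x₂) - Real.log ((1-lam)*y₂)) = (1-lam) * phi x₂ y₂ := by
      have := phi_smul (1-lam) x₂ y₂ hl' hx₂ hy₂'; unfold phi at this ⊢; linarith
    rw [e1, e2] at key
    exact key

lemma klR_self (p : ℝ) : klR p p = 0 := by simp [klR, phi]

lemma klR_nonneg (p q : ℝ) (hp0 : 0 ≤ p) (hp1 : p ≤ 1) (hq0 : 0 < q) (hq1 : q < 1) :
    0 ≤ klR p q := by
  have h := logsum p (1-p) q (1-q) hp0 (by linarith) hq0 (by linarith)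
  rw [show p + (1-p) = (1:ℝ) by ring, show q + (1-q) = (1:ℝ) by ring] at h
  simp only [Real.log_one] at h
  unfold klR phi
  nlinarith [h]

lemma klR_mono (p a b : ℝ) (ha : 0 < a) (hab : a ≤ b) (hbp : b ≤ p) (hb1 : b < 1) (hp1 : p ≤ 1) :
    klR p b ≤ klR p a := by
  have hb : 0 < b := lt_of_lt_of_le ha hab
  have hp : 0 < p := lt_of_lt_of_le hb hbp
  have h1 : (b-a)/b ≤ Real.log b - Real.log a := by
    have hl := log_ge (b/a) (by positivity)
    rw [Real.log_div (ne_of_gt hb) (ne_of_gt ha), inv_div] at hl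
    have e : 1 - a/b = (b-a)/b := by
      rw [sub_div, div_self (ne_of_gt hb)]
    linarith
  have h2 : Real.log (1-a) - Real.log (1-b) ≤ (b-a)/(1-b) := by
    have hub := Real.log_le_sub_one_of_pos (show (0:ℝ) < (1-a)/(1-b) by
      apply div_pos <;> linarith)
    rw [Real.log_div (by linarith : (1:ℝ)-a ≠ 0) (by linarith : (1:ℝ)-b ≠ 0)] at hub
    have e : (1-a)/(1-b) - 1 = (b-a)/(1-b) := by
      rw [div_sub_one (by linarith : (1:ℝ)-b ≠ 0)]; ring_nf
    linarith
  have m1 := mul_le_mul_of_nonneg_left h1 hp.le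
  have m2 := mul_le_mul_of_nonneg_left h2 (by linarith : (0:ℝ) ≤ 1-p)
  have key : 0 ≤ p*((b-a)/b) - (1-p)*((b-a)/(1-b)) := by
    rw [sub_nonneg, show (1-p)*((b-a)/(1-b)) = (1-p)*(b-a)/(1-b) from by ring,
        show p*((b-a)/b) = p*(b-a)/b from by ring,
        div_le_div_iff₀ (by linarith) hb]
    nlinarith [mul_nonneg (sub_nonneg.2 hab) (sub_nonneg.2 hbp)]
  unfold klR phi
  linarith [m1, m2, key]

lemma bernKL_eq (p q : ℝ) (hp0 : 0 ≤ p) (hp1 : p ≤ 1) (hq0 : 0 < q) (hq1 : q < 1) :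
    bernKL p q = ((klR p q : ℝ) : EReal) := by
  rcases eq_or_lt_of_le hp0 with h0 | h0
  · rw [← h0]
    simp [bernKL, hq1.ne, klR, phi, Real.log_zero]
  rcases eq_or_lt_of_le hp1 with h1 | h1
  · rw [h1]
    simp [bernKL, hq0.ne', klR, phi, Real.log_zero]
  · rw [bernKL, if_neg h0.ne', if_neg h1.ne,
      if_neg (by push_neg; exact ⟨hq0.ne', hq1.ne⟩)]
    congr 1
    rw [Real.log_div h0.ne' hq0.ne',
      Real.log_div (by linarith : (1:ℝ)-p ≠ 0) (by linarith : (1:ℝ)-q ≠ 0)]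
    unfold klR phi; ring

lemma klp_cases (p q : ℝ) (hp : p ∈ Set.Icc (0:ℝ) 1) (hq : q ∈ Set.Icc (0:ℝ) 1) :
    bernKLplus p q = ⊤ ∨
    (p ≤ q ∧ bernKLplus p q = ((klR p p : ℝ):EReal)) ∨
    (0 < q ∧ q < 1 ∧ q < p ∧ bernKLplus p q = ((klR p q : ℝ):EReal)) := by
  by_cases hlt : q < p
  · by_cases hq0 : q = 0
    · left
      subst hq0
      rw [bernKLplus, if_pos hlt]
      simp [bernKL, hlt.ne']
    · right; right
      have hq0' : 0 < q := lt_of_le_of_ne hq.1 (Ne.symm hq0)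
      have hq1 : q < 1 := lt_of_lt_of_le hlt hp.2
      exact ⟨hq0', hq1, hlt, by rw [bernKLplus, if_pos hlt, bernKL_eq p q hp.1 hp.2 hq0' hq1]⟩
  · right; left
    refine ⟨not_lt.mp hlt, ?_⟩
    rw [bernKLplus, if_neg hlt, klR_self]
    norm_num

lemma klp_nonneg (p q : ℝ) (hp : p ∈ Set.Icc (0:ℝ) 1) (hq : q ∈ Set.Icc (0:ℝ) 1) :
    0 ≤ bernKLplus p q := by
  rcases klp_cases p q hp hq with h | ⟨_, h⟩ | ⟨h0, h1, _, h⟩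
  · rw [h]; exact le_top
  · rw [h, klR_self]; norm_num
  · rw [h]; exact_mod_cast klR_nonneg p q hp.1 hp.2 h0 h1

lemma klp_repr (p q : ℝ) (hp : p ∈ Set.Icc (0:ℝ) 1) (hq : q ∈ Set.Icc (0:ℝ) 1)
    (hne : bernKLplus p q ≠ ⊤) :
    ∃ m, 0 ≤ m ∧ m ≤ p ∧ m ≤ q ∧ (m = 0 → p = 0) ∧ (m = 1 → p = 1) ∧
      bernKLplus p q = ((klR p m : ℝ) : EReal) := by
  rcases klp_cases p q hp hq with h | ⟨hle, h⟩ | ⟨h0, h1, hlt, h⟩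
  · exact absurd h hne
  · exact ⟨p, hp.1, le_refl p, hle, fun h => h, fun h => h, h⟩
  · exact ⟨q, hq.1, hlt.le, le_refl q,
      fun he => absurd (he ▸ h0) (lt_irrefl 0),
      fun he => absurd (he ▸ h1) (lt_irrefl 1), h⟩

theorem main (p₁ p₂ q₁ q₂ lam : ℝ)
    (hp₁ : p₁ ∈ Set.Icc (0:ℝ) 1) (hp₂ : p₂ ∈ Set.Icc (0:ℝ) 1)
    (hq₁ : q₁ ∈ Set.Icc (0:ℝ) 1) (hq₂ : q₂ ∈ Set.Icc (0:ℝ) 1)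
    (hlam : lam ∈ Set.Icc (0:ℝ) 1) :
    bernKLplus (lam * p₁ + (1 - lam) * p₂) (lam * q₁ + (1 - lam) * q₂) ≤
      ((lam : ℝ) : EReal) * bernKLplus p₁ q₁ + ((1 - lam : ℝ) : EReal) * bernKLplus p₂ q₂ := by
  obtain ⟨hl0, hl1⟩ := hlam
  rcases eq_or_lt_of_le hl0 with h0 | h0
  · rw [← h0]; norm_num
  rcases eq_or_lt_of_le hl1 with h1 | h1
  · rw [h1]; norm_num
  by_cases hA : bernKLplus p₁ q₁ = ⊤
  · rw [hA]
    have hB0 : (0:EReal) ≤ ((1-lam:ℝ):EReal) * bernKLplus p₂ q₂ :=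
      mul_nonneg (by exact_mod_cast (by linarith : (0:ℝ) ≤ 1-lam)) (klp_nonneg p₂ q₂ hp₂ hq₂)
    rw [EReal.mul_top_of_pos (by exact_mod_cast h0),
        EReal.top_add_of_ne_bot (lt_of_lt_of_le (by norm_num) hB0).ne']
    exact le_top
  by_cases hB : bernKLplus p₂ q₂ = ⊤
  · rw [hB]
    have hA0 : (0:EReal) ≤ ((lam:ℝ):EReal) * bernKLplus p₁ q₁ :=
      mul_nonneg (by exact_mod_cast h0.le) (klp_nonneg p₁ q₁ hp₁ hq₁)
    rw [EReal.mul_top_of_pos (by exact_mod_cast (by linarith : (0:ℝ) < 1-lam)),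
        EReal.add_top_of_ne_bot (lt_of_lt_of_le (by norm_num) hA0).ne']
    exact le_top
  obtain ⟨m₁, hm₁0, hm₁p, hm₁q, hm₁z, hm₁o, hA'⟩ := klp_repr p₁ q₁ hp₁ hq₁ hA
  obtain ⟨m₂, hm₂0, hm₂p, hm₂q, hm₂z, hm₂o, hB'⟩ := klp_repr p₂ q₂ hp₂ hq₂ hB
  by_cases hlt : lam * q₁ + (1 - lam) * q₂ < lam * p₁ + (1 - lam) * p₂
  swap
  · rw [show bernKLplus (lam * p₁ + (1 - lam) * p₂) (lam * q₁ + (1 - lam) * q₂) = 0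
      from if_neg hlt]
    exact add_nonneg
      (mul_nonneg (by exact_mod_cast h0.le) (klp_nonneg p₁ q₁ hp₁ hq₁))
      (mul_nonneg (by exact_mod_cast (by linarith : (0:ℝ) ≤ 1-lam)) (klp_nonneg p₂ q₂ hp₂ hq₂))
  have hpb1 : lam * p₁ + (1 - lam) * p₂ ≤ 1 := by nlinarith [hp₁.2, hp₂.2]
  have hpb0 : 0 ≤ lam * p₁ + (1 - lam) * p₂ := by nlinarith [hp₁.1, hp₂.1]
  have hqb0 : 0 ≤ lam * q₁ + (1 - lam) * q₂ := by nlinarith [hq₁.1, hq₂.1]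
  have hqb1 : lam * q₁ + (1 - lam) * q₂ < 1 := lt_of_lt_of_le hlt hpb1
  have hmb_pos : 0 < lam * m₁ + (1 - lam) * m₂ := by
    rcases lt_or_ge 0 (lam * m₁ + (1 - lam) * m₂) with h | h
    · exact h
    · exfalso
      have e1 : m₁ = 0 := by nlinarith
      have e2 : m₂ = 0 := by nlinarith
      have := hm₁z e1; have := hm₂z e2
      nlinarith
  have hmb_qb : lam * m₁ + (1 - lam) * m₂ ≤ lam * q₁ + (1 - lam) * q₂ := by nlinarith
  have hLHS : bernKLplus (lam * p₁ + (1 - lam) * p₂) (lam * q₁ + (1 - lam) * q₂) =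
      ((klR (lam * p₁ + (1 - lam) * p₂) (lam * q₁ + (1 - lam) * q₂) : ℝ) : EReal) := by
    rw [bernKLplus, if_pos hlt,
      bernKL_eq _ _ hpb0 hpb1 (lt_of_lt_of_le hmb_pos hmb_qb) hqb1]
  have step1 : klR (lam * p₁ + (1 - lam) * p₂) (lam * q₁ + (1 - lam) * q₂) ≤
      klR (lam * p₁ + (1 - lam) * p₂) (lam * m₁ + (1 - lam) * m₂) :=
    klR_mono _ _ _ hmb_pos hmb_qb hlt.le hqb1 hpb1
  have step2 : klR (lam * p₁ + (1 - lam) * p₂) (lam * m₁ + (1 - lam) * m₂) ≤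
      lam * klR p₁ m₁ + (1-lam) * klR p₂ m₂ := by
    have c1 := phi_cvx lam p₁ p₂ m₁ m₂ h0 h1 hp₁.1 hp₂.1 hm₁0 hm₂0 hm₁z hm₂z
    have c2 := phi_cvx lam (1-p₁) (1-p₂) (1-m₁) (1-m₂) h0 h1
      (by linarith [hp₁.2]) (by linarith [hp₂.2]) (by linarith [hm₁p, hp₁.2]) (by linarith [hm₂p, hp₂.2])
      (fun h => by have := hm₁o (by linarith); linarith)
      (fun h => by have := hm₂o (by linarith); linarith)
    unfold klR
    rw [show (1:ℝ) - (lam * p₁ + (1 - lam) * p₂) = lam*(1-p₁)+(1-lam)*(1-p₂) from by ring,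
        show (1:ℝ) - (lam * m₁ + (1 - lam) * m₂) = lam*(1-m₁)+(1-lam)*(1-m₂) from by ring]
    linarith [c1, c2]
  rw [hLHS, hA', hB']
  calc ((klR (lam * p₁ + (1 - lam) * p₂) (lam * q₁ + (1 - lam) * q₂) : ℝ) : EReal)
      ≤ ((lam * klR p₁ m₁ + (1-lam) * klR p₂ m₂ : ℝ) : EReal) :=
        EReal.coe_le_coe_iff.mpr (le_trans step1 step2)
    _ = ((lam : ℝ) : EReal) * ((klR p₁ m₁ : ℝ) : EReal) +
        ((1 - lam : ℝ) : EReal) * ((klR p₂ m₂ : ℝ) : EReal) := by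
        rw [EReal.coe_add, EReal.coe_mul, EReal.coe_mul]

end BernAux

/-- The function `kl₊` is jointly convex on `[0,1] × [0,1]`. -/
theorem bernKLplus_jointly_convex (p₁ p₂ q₁ q₂ lam : ℝ)
    (hp₁ : p₁ ∈ Set.Icc (0:ℝ) 1) (hp₂ : p₂ ∈ Set.Icc (0:ℝ) 1)
    (hq₁ : q₁ ∈ Set.Icc (0:ℝ) 1) (hq₂ : q₂ ∈ Set.Icc (0:ℝ) 1)
    (hlam : lam ∈ Set.Icc (0:ℝ) 1) :
    bernKLplus (lam * p₁ + (1 - lam) * p₂) (lam * q₁ + (1 - lam) * q₂) ≤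
      ((lam : ℝ) : EReal) * bernKLplus p₁ q₁ + ((1 - lam : ℝ) : EReal) * bernKLplus p₂ q₂ :=
  BernAux.main p₁ p₂ q₁ q₂ lam hp₁ hp₂ hq₁ hq₂ hlam
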